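/- Let x* ∈ ℝⁿ be k-sparse with support S and min_{i∈S} |x_i*| ≥ c‖x*‖₂/√k for a constant c > 0. If x ∈ ℝⁿ satisfies x_i x_i* ≥ 0 and |x_i| ≥ |x_i*|/2 for all i, then D_Φ(x*, x) ≤ (√k/(c‖x*‖₂)) · ‖x_S − x_S*‖₂² + ‖x_{S^c}‖₁. -/

import Mathlib

open Finset
open scoped Classical

private lemma hyb_sqrt_one_add {β : ℝ} (hβ : 0 < β) (t : ℝ) :
    Real.sqrt (1 + (t / β) ^ 2) = Real.sqrt (t ^ 2 + β ^ 2) / β := by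
  rw [show 1 + (t / β) ^ 2 = (t ^ 2 + β ^ 2) / β ^ 2 by field_simp; ring,
    Real.sqrt_div (by positivity) , Real.sqrt_sq hβ.le]

private lemma hyb_hasDerivAt_hyp {β : ℝ} (hβ : 0 < β) (t : ℝ) :
    HasDerivAt (fun s : ℝ => s * Real.arsinh (s / β) - Real.sqrt (s ^ 2 + β ^ 2))
      (Real.arsinh (t / β)) t := by
  have hpos : 0 < t ^ 2 + β ^ 2 := by positivity
  have h1 : HasDerivAt (fun s : ℝ => Real.arsinh (s / β))
      ((Real.sqrt (1 + (t / β) ^ 2))⁻¹ * (1 / β)) t := by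
    have := (Real.hasDerivAt_arsinh (t / β)).comp t ((hasDerivAt_id t).div_const β); exact this
  have h2 : HasDerivAt (fun s : ℝ => s * Real.arsinh (s / β))
      (1 * Real.arsinh (t / β) + t * ((Real.sqrt (1 + (t / β) ^ 2))⁻¹ * (1 / β))) t :=
    (hasDerivAt_id t).mul h1
  have h3 : HasDerivAt (fun s : ℝ => Real.sqrt (s ^ 2 + β ^ 2))
      (1 / (2 * Real.sqrt (t ^ 2 + β ^ 2)) * (2 * t)) t := by
    have hi : HasDerivAt (fun s : ℝ => s ^ 2 + β ^ 2) (2 * t) t := by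
      simpa using (hasDerivAt_pow 2 t).add_const (β ^ 2)
    exact (Real.hasDerivAt_sqrt hpos.ne').comp t hi
  have h := h2.fun_sub h3
  refine h.congr_deriv ?_
  have hs : 0 < Real.sqrt (t ^ 2 + β ^ 2) := Real.sqrt_pos.2 hpos
  rw [hyb_sqrt_one_add hβ t]
  field_simp
  ring

private lemma hyb_arsinh_diff_le {β m u t : ℝ} (hβ : 0 < β) (hm : 0 < m) (hu : m ≤ u) (hut : u ≤ t) :
    Real.arsinh (t / β) - Real.arsinh (u / β) ≤ (t - u) / m := by
  have h := Convex.norm_image_sub_le_of_norm_hasDerivWithin_le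
    (f := fun s : ℝ => Real.arsinh (s / β))
    (f' := fun s : ℝ => (Real.sqrt (1 + (s / β) ^ 2))⁻¹ * (1 / β))
    (s := Set.Icc u t) (C := 1 / m)
    (fun s _ => by have := ((Real.hasDerivAt_arsinh (s / β)).comp s
      ((hasDerivAt_id s).div_const β)).hasDerivWithinAt (s := Set.Icc u t); exact this)
    (fun s hs => ?_) (convex_Icc u t) (Set.left_mem_Icc.2 hut) (Set.right_mem_Icc.2 hut)
  · rw [Real.norm_eq_abs, Real.norm_eq_abs, abs_of_nonneg (by linarith : (0:ℝ) ≤ t - u)] at h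
    calc Real.arsinh (t / β) - Real.arsinh (u / β)
        ≤ |Real.arsinh (t / β) - Real.arsinh (u / β)| := le_abs_self _
      _ ≤ 1 / m * (t - u) := h
      _ = (t - u) / m := by ring
  · have hs1 : m ≤ s := le_trans hu hs.1
    have hsq : m ≤ Real.sqrt (s ^ 2 + β ^ 2) :=
      Real.le_sqrt_of_sq_le (by nlinarith)
    have he : (Real.sqrt (1 + (s / β) ^ 2))⁻¹ * (1 / β) = (Real.sqrt (s ^ 2 + β ^ 2))⁻¹ := by
      rw [hyb_sqrt_one_add hβ]
      have : 0 < Real.sqrt (s ^ 2 + β ^ 2) := lt_of_lt_of_le hm hsq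
      field_simp
    simp only [Real.norm_eq_abs]
    rw [he, abs_of_nonneg (by positivity), one_div]
    exact inv_anti₀ hm hsq

private lemma hyb_key_pos {β a b : ℝ} (hβ : 0 < β) (ha : 0 < a) (hb : a / 2 ≤ b) :
    a * Real.arsinh (a / β) - Real.sqrt (a ^ 2 + β ^ 2)
      - (b * Real.arsinh (b / β) - Real.sqrt (b ^ 2 + β ^ 2))
      - Real.arsinh (b / β) * (a - b) ≤ (b - a) ^ 2 / a := by
  set A := Real.arsinh (b / β) with hA
  have hg : ∀ t : ℝ, HasDerivAt
      (fun s : ℝ => s * Real.arsinh (s / β) - Real.sqrt (s ^ 2 + β ^ 2) - A * s)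
      (Real.arsinh (t / β) - A) t := fun t => by
    simpa using (hyb_hasDerivAt_hyp hβ t).fun_sub ((hasDerivAt_id t).const_mul A)
  have hcont : Continuous fun t : ℝ => Real.arsinh (t / β) - A :=
    (Real.continuous_arsinh.comp (continuous_id.div_const β)).sub continuous_const
  have hbpos : 0 < b := lt_of_lt_of_le (by linarith) hb
  have hc2 : Continuous fun t : ℝ => 2 * (t - b) / a := by fun_prop
  have hc3 : Continuous fun t : ℝ => 2 * (b - t) / a := by fun_prop
  rcases le_total b a with hba | hab
  · -- b ≤ a
    have hint : ∫ t in b..a, (Real.arsinh (t / β) - A)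
        = (a * Real.arsinh (a / β) - Real.sqrt (a ^ 2 + β ^ 2) - A * a)
          - (b * Real.arsinh (b / β) - Real.sqrt (b ^ 2 + β ^ 2) - A * b) :=
      intervalIntegral.integral_eq_sub_of_hasDerivAt (fun t _ => hg t)
        (hcont.intervalIntegrable b a)
    have hint2 : ∫ t in b..a, (2 * (t - b) / a) = (a - b) ^ 2 / a := by
      have : ∀ t : ℝ, HasDerivAt (fun s : ℝ => (s - b) ^ 2 / a) (2 * (t - b) / a) t := by
        intro t
        have := (((hasDerivAt_id t).sub_const b).pow 2).div_const a
        simpa using this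
      rw [intervalIntegral.integral_eq_sub_of_hasDerivAt (fun t _ => this t)
        (hc2.intervalIntegrable b a)]
      simp
    have hmono : ∫ t in b..a, (Real.arsinh (t / β) - A) ≤ ∫ t in b..a, (2 * (t - b) / a) := by
      apply intervalIntegral.integral_mono_on hba (hcont.intervalIntegrable b a)
        (hc2.intervalIntegrable b a)
      intro t ht
      have h1 := hyb_arsinh_diff_le hβ (by linarith : (0:ℝ) < a / 2) hb ht.1
      calc Real.arsinh (t / β) - A ≤ (t - b) / (a / 2) := h1
        _ = 2 * (t - b) / a := by field_simp
    rw [hint, hint2] at hmono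
    have e : a * Real.arsinh (a / β) - Real.sqrt (a ^ 2 + β ^ 2)
        - (b * A - Real.sqrt (b ^ 2 + β ^ 2)) - A * (a - b)
        = a * Real.arsinh (a / β) - Real.sqrt (a ^ 2 + β ^ 2) - A * a
          - (b * Real.arsinh (b / β) - Real.sqrt (b ^ 2 + β ^ 2) - A * b) := by
      rw [hA]; ring
    rw [e, show (b - a) ^ 2 / a = (a - b) ^ 2 / a by ring]
    exact hmono
  · -- a ≤ b
    have hint : ∫ t in a..b, (A - Real.arsinh (t / β))
        = -((b * Real.arsinh (b / β) - Real.sqrt (b ^ 2 + β ^ 2) - A * b)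
          - (a * Real.arsinh (a / β) - Real.sqrt (a ^ 2 + β ^ 2) - A * a)) := by
      rw [show (fun t : ℝ => A - Real.arsinh (t / β))
          = fun t : ℝ => -(Real.arsinh (t / β) - A) by funext t; ring,
        intervalIntegral.integral_neg,
        intervalIntegral.integral_eq_sub_of_hasDerivAt (fun t _ => hg t)
          (hcont.intervalIntegrable a b)]
    have hint2 : ∫ t in a..b, (2 * (b - t) / a) = (b - a) ^ 2 / a := by
      have : ∀ t : ℝ, HasDerivAt (fun s : ℝ => -((b - s) ^ 2) / a) (2 * (b - t) / a) t := by
        intro t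
        have := (((hasDerivAt_const t b).fun_sub (hasDerivAt_id t)).pow 2).fun_neg.div_const a
        refine this.congr_deriv ?_
        simp
      rw [intervalIntegral.integral_eq_sub_of_hasDerivAt (fun t _ => this t)
        (hc3.intervalIntegrable a b)]
      field_simp
      ring
    have hmono : ∫ t in a..b, (A - Real.arsinh (t / β)) ≤ ∫ t in a..b, (2 * (b - t) / a) := by
      apply intervalIntegral.integral_mono_on hab
        ((continuous_const.sub (Real.continuous_arsinh.comp
          (continuous_id.div_const β))).intervalIntegrable a b)
        (hc3.intervalIntegrable a b)
      intro t ht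
      have h1 := hyb_arsinh_diff_le hβ (by linarith : (0:ℝ) < a / 2)
        (by linarith [ht.1] : a / 2 ≤ t) ht.2
      calc A - Real.arsinh (t / β) ≤ (b - t) / (a / 2) := h1
        _ = 2 * (b - t) / a := by field_simp
    rw [hint, hint2] at hmono
    have e : a * Real.arsinh (a / β) - Real.sqrt (a ^ 2 + β ^ 2)
        - (b * A - Real.sqrt (b ^ 2 + β ^ 2)) - A * (a - b)
        = -((b * Real.arsinh (b / β) - Real.sqrt (b ^ 2 + β ^ 2) - A * b)
          - (a * Real.arsinh (a / β) - Real.sqrt (a ^ 2 + β ^ 2) - A * a)) := by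
      rw [hA]; ring
    rw [e]
    exact hmono

private lemma hyb_key {β a b : ℝ} (hβ : 0 < β) (ha : a ≠ 0) (hsg : 0 ≤ b * a)
    (hh : |a| / 2 ≤ |b|) :
    a * Real.arsinh (a / β) - Real.sqrt (a ^ 2 + β ^ 2)
      - (b * Real.arsinh (b / β) - Real.sqrt (b ^ 2 + β ^ 2))
      - Real.arsinh (b / β) * (a - b) ≤ (b - a) ^ 2 / |a| := by
  rcases ha.lt_or_gt with h | h
  · have hb : b ≤ 0 := by nlinarith
    rw [abs_of_neg h, abs_of_nonpos hb] at hh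
    have H := hyb_key_pos (a := -a) (b := -b) hβ (by linarith) (by linarith)
    rw [abs_of_neg h]
    simp only [neg_div, Real.arsinh_neg, neg_sq] at H
    calc a * Real.arsinh (a / β) - Real.sqrt (a ^ 2 + β ^ 2)
        - (b * Real.arsinh (b / β) - Real.sqrt (b ^ 2 + β ^ 2))
        - Real.arsinh (b / β) * (a - b)
        = -a * -Real.arsinh (a / β) - Real.sqrt (a ^ 2 + β ^ 2)
          - (-b * -Real.arsinh (b / β) - Real.sqrt (b ^ 2 + β ^ 2))
          - -Real.arsinh (b / β) * (-a - -b) := by ring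
      _ ≤ (-b - -a) ^ 2 / -a := H
      _ = (b - a) ^ 2 / -a := by ring_nf
  · have hb : 0 ≤ b := by nlinarith
    rw [abs_of_pos h, abs_of_nonneg hb] at hh
    rw [abs_of_pos h]
    exact hyb_key_pos hβ h hh

private lemma hyb_fderiv_Phi {n : ℕ} {β : ℝ} (hβ : 0 < β) (Φ : (Fin n → ℝ) → ℝ)
    (hΦ : ∀ y : Fin n → ℝ,
      Φ y = ∑ i, (y i * Real.arsinh (y i / β) - Real.sqrt ((y i) ^ 2 + β ^ 2)))
    (x v : Fin n → ℝ) :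
    fderiv ℝ Φ x v = ∑ i, Real.arsinh (x i / β) * v i := by
  have hΦ' : Φ = fun y => ∑ i, (y i * Real.arsinh (y i / β)
      - Real.sqrt ((y i) ^ 2 + β ^ 2)) := funext hΦ
  subst hΦ'
  have H : HasFDerivAt (fun y : Fin n → ℝ => ∑ i, (y i * Real.arsinh (y i / β)
      - Real.sqrt ((y i) ^ 2 + β ^ 2)))
      (∑ i : Fin n, Real.arsinh (x i / β) •
        (ContinuousLinearMap.proj (R := ℝ) (φ := fun _ : Fin n => ℝ) i)) x := by
    apply HasFDerivAt.fun_sum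
    intro i _
    exact (hyb_hasDerivAt_hyp hβ (x i)).comp_hasFDerivAt x (hasFDerivAt_apply (𝕜 := ℝ) (F' := fun _ : Fin n => ℝ) i x)
  rw [H.fderiv]
  simp [ContinuousLinearMap.sum_apply, smul_eq_mul]

/-- Upper bound on the Bregman divergence of the hypentropy mirror map for
vectors with matched signs and coordinates at least half the signal size. -/
theorem hypentropy_bregman_upper_bound (n k : ℕ) (β c : ℝ) (hβ : 0 < β) (hc : 0 < c)
    (Φ : (Fin n → ℝ) → ℝ)
    (hΦ : ∀ y : Fin n → ℝ,
      Φ y = ∑ i, (y i * Real.arsinh (y i / β) - Real.sqrt ((y i) ^ 2 + β ^ 2)))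
    (xs : Fin n → ℝ)
    (S : Finset (Fin n)) (hS : S = Finset.univ.filter fun i => xs i ≠ 0)
    (hk : S.card ≤ k)
    (hmin : ∀ i ∈ S, c / Real.sqrt k * Real.sqrt (∑ l, (xs l) ^ 2) ≤ |xs i|)
    (x : Fin n → ℝ)
    (hsign : ∀ i, 0 ≤ x i * xs i)
    (hhalf : ∀ i, |xs i| / 2 ≤ |x i|) :
    Φ xs - Φ x - fderiv ℝ Φ x (fun i => xs i - x i) ≤
      Real.sqrt k / (c * Real.sqrt (∑ l, (xs l) ^ 2)) * ∑ i ∈ S, (x i - xs i) ^ 2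
        + ∑ i ∈ Sᶜ, |x i| := by
  set N := Real.sqrt (∑ l, (xs l) ^ 2) with hN
  set T : Fin n → ℝ := fun i =>
    xs i * Real.arsinh (xs i / β) - Real.sqrt ((xs i) ^ 2 + β ^ 2)
      - (x i * Real.arsinh (x i / β) - Real.sqrt ((x i) ^ 2 + β ^ 2))
      - Real.arsinh (x i / β) * (xs i - x i) with hT
  have hD : Φ xs - Φ x - fderiv ℝ Φ x (fun i => xs i - x i) = ∑ i, T i := by
    rw [hΦ xs, hΦ x, hyb_fderiv_Phi hβ Φ hΦ x (fun i => xs i - x i),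
      ← Finset.sum_sub_distrib, ← Finset.sum_sub_distrib]
  rw [hD, ← Finset.sum_add_sum_compl S T]
  have part1 : ∑ i ∈ S, T i ≤ Real.sqrt k / (c * N) * ∑ i ∈ S, (x i - xs i) ^ 2 := by
    rw [Finset.mul_sum]
    apply Finset.sum_le_sum
    intro i hi
    have hxs : xs i ≠ 0 := by
      rw [hS] at hi; exact (Finset.mem_filter.1 hi).2
    have hNpos : 0 < N := by
      apply Real.sqrt_pos.2
      have h0 := Finset.single_le_sum (f := fun l => (xs l) ^ 2)
        (fun l _ => sq_nonneg _) (Finset.mem_univ i)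
      have hx2 : 0 < xs i ^ 2 := by
        have := sq_abs (xs i)
        nlinarith [abs_pos.2 hxs]
      linarith
    have hk1 : (1 : ℝ) ≤ (k : ℝ) := by
      have : 1 ≤ S.card := Finset.card_pos.2 ⟨i, hi⟩
      exact_mod_cast le_trans this hk
    have hskpos : 0 < Real.sqrt k := Real.sqrt_pos.2 (by linarith)
    have hM : 0 < c / Real.sqrt k * N := by positivity
    have h1 : T i ≤ (x i - xs i) ^ 2 / |xs i| :=
      hyb_key hβ hxs (hsign i) (hhalf i)
    have h2 : (x i - xs i) ^ 2 / |xs i| ≤ (x i - xs i) ^ 2 / (c / Real.sqrt k * N) := by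
      gcongr
      exact hmin i hi
    have h3 : (x i - xs i) ^ 2 / (c / Real.sqrt k * N)
        = Real.sqrt k / (c * N) * (x i - xs i) ^ 2 := by
      field_simp
    linarith
  have part2 : ∑ i ∈ Sᶜ, T i ≤ ∑ i ∈ Sᶜ, |x i| := by
    apply Finset.sum_le_sum
    intro i hi
    have hxs : xs i = 0 := by
      rw [Finset.mem_compl, hS, Finset.mem_filter] at hi
      by_contra h
      exact hi ⟨Finset.mem_univ i, h⟩
    have hb : Real.sqrt (β ^ 2) = β := Real.sqrt_sq hβ.le
    have hle : Real.sqrt ((x i) ^ 2 + β ^ 2) ≤ |x i| + β := by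
      rw [← Real.sqrt_sq (by positivity : (0:ℝ) ≤ |x i| + β)]
      apply Real.sqrt_le_sqrt
      nlinarith [abs_nonneg (x i), sq_abs (x i)]
    have hTe : T i = Real.sqrt ((x i) ^ 2 + β ^ 2) - β := by
      rw [hT]
      simp only [hxs, zero_mul, zero_sub, zero_div, Real.arsinh_zero]
      rw [show (0:ℝ) ^ 2 + β ^ 2 = β ^ 2 by ring, hb]
      ring
    linarith
  exact add_le_add part1 part2
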